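/- arXiv:1909.08680 — 7 statements merged into one kernel-verified Lean document; each statement's English description precedes it below -/
import Mathlib

section
/- For all integers n ≥ 3 and N ≥ n² − n, every 2-coloring of the Boolean lattice Q_N contains a copy of Q_n all of whose elements other than possibly the empty set and the full ground set [N] are red, or a copy of Q_n all of whose elements other than possibly the empty set and [N] are blue. (Equivalently, the modified poset Ramsey number satisfies R̂(Q_n, Q_n) ≤ n² − n for n ≥ 3.) -/
/-- A red copy of the Boolean lattice `Q m` inside the 2-colored Boolean lattice `Q N`,
where `c S = true` means `S` is red and `c S = false` means `S` is blue. -/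
def HasRedCopy (m N : ℕ) (c : Finset (Fin N) → Bool) : Prop :=
  ∃ f : Finset (Fin m) → Finset (Fin N),
    Function.Injective f ∧
    (∀ S T : Finset (Fin m), S ⊆ T ↔ f S ⊆ f T) ∧
    (∀ S : Finset (Fin m), c (f S) = true)

/-- A blue copy of the Boolean lattice `Q m` inside the 2-colored Boolean lattice `Q N`. -/
def HasBlueCopy (m N : ℕ) (c : Finset (Fin N) → Bool) : Prop :=
  ∃ f : Finset (Fin m) → Finset (Fin N),
    Function.Injective f ∧
    (∀ S T : Finset (Fin m), S ⊆ T ↔ f S ⊆ f T) ∧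
    (∀ S : Finset (Fin m), c (f S) = false)
/-- A copy of `Q m` in `Q N` all of whose elements, other than possibly `∅` and the
full ground set, are red. -/
def HasQuasiRedCopy (m N : ℕ) (c : Finset (Fin N) → Bool) : Prop :=
  ∃ f : Finset (Fin m) → Finset (Fin N),
    Function.Injective f ∧
    (∀ S T : Finset (Fin m), S ⊆ T ↔ f S ⊆ f T) ∧
    (∀ S : Finset (Fin m), f S ≠ ∅ → f S ≠ Finset.univ → c (f S) = true)

/-- A copy of `Q m` in `Q N` all of whose elements, other than possibly `∅` and the
full ground set, are blue. -/
def HasQuasiBlueCopy (m N : ℕ) (c : Finset (Fin N) → Bool) : Prop :=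
  ∃ f : Finset (Fin m) → Finset (Fin N),
    Function.Injective f ∧
    (∀ S T : Finset (Fin m), S ⊆ T ↔ f S ⊆ f T) ∧
    (∀ S : Finset (Fin m), f S ≠ ∅ → f S ≠ Finset.univ → c (f S) = false)

namespace HatRamseyAux

open Finset

/-- Glue a "middle" construction with the free endpoints `∅ ↦ ∅`, `univ ↦ univ`
into a full cube embedding. -/
lemma glue {m N : ℕ} (hm : 0 < m) (hN : 0 < N)
    (body : Finset (Fin m) → Finset (Fin N))
    (hne : ∀ S, S ≠ ∅ → S ≠ Finset.univ → body S ≠ ∅)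
    (hnu : ∀ S, S ≠ ∅ → S ≠ Finset.univ → body S ≠ Finset.univ)
    (hmono : ∀ S T, S ≠ ∅ → S ≠ Finset.univ → T ≠ ∅ → T ≠ Finset.univ →
      S ⊆ T → body S ⊆ body T)
    (hrev : ∀ S T, S ≠ ∅ → S ≠ Finset.univ → T ≠ ∅ → T ≠ Finset.univ →
      body S ⊆ body T → S ⊆ T) :
    ∃ f : Finset (Fin m) → Finset (Fin N),
      Function.Injective f ∧ (∀ S T, S ⊆ T ↔ f S ⊆ f T) ∧
      (∀ S, S ≠ ∅ → S ≠ Finset.univ → f S = body S) ∧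
      f ∅ = ∅ ∧ f Finset.univ = Finset.univ := by
  classical
  haveI : Nonempty (Fin m) := ⟨⟨0, hm⟩⟩
  haveI : Nonempty (Fin N) := ⟨⟨0, hN⟩⟩
  have hmU : (∅ : Finset (Fin m)) ≠ Finset.univ := by
    intro h
    have := (Finset.univ_nonempty (α := Fin m))
    rw [← h] at this
    exact Finset.not_nonempty_empty this
  have hNU : (∅ : Finset (Fin N)) ≠ Finset.univ := by
    intro h
    have := (Finset.univ_nonempty (α := Fin N))
    rw [← h] at this
    exact Finset.not_nonempty_empty this
  set f : Finset (Fin m) → Finset (Fin N) := fun S =>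
    if S = ∅ then ∅ else if S = Finset.univ then Finset.univ else body S with hf
  have hmid : ∀ S, S ≠ ∅ → S ≠ Finset.univ → f S = body S := by
    intro S h1 h2; simp only [hf, if_neg h1, if_neg h2]
  have h0 : f ∅ = ∅ := by simp only [hf, if_pos rfl]
  have hU : f Finset.univ = Finset.univ := by
    simp only [hf, if_neg (Ne.symm hmU)]
    simp
  have hiff : ∀ S T, S ⊆ T ↔ f S ⊆ f T := by
    intro S T
    constructor
    · intro hST
      by_cases hS0 : S = ∅
      · subst hS0; rw [h0]; exact Finset.empty_subset _
      by_cases hTu : T = Finset.univ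
      · subst hTu; rw [hU]; exact Finset.subset_univ _
      have hT0 : T ≠ ∅ := by
        intro h; subst h; exact hS0 (Finset.subset_empty.mp hST)
      have hSu : S ≠ Finset.univ := by
        intro h; subst h; exact hTu (Finset.univ_subset_iff.mp hST)
      rw [hmid S hS0 hSu, hmid T hT0 hTu]
      exact hmono S T hS0 hSu hT0 hTu hST
    · intro hf'
      by_cases hS0 : S = ∅
      · subst hS0; exact Finset.empty_subset _
      by_cases hTu : T = Finset.univ
      · subst hTu; exact Finset.subset_univ _
      by_cases hSu : S = Finset.univ
      · -- f S = univ ⊆ f T forces f T = univ, impossible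
        exfalso
        subst hSu
        rw [hU] at hf'
        have hTU : f T = Finset.univ := Finset.univ_subset_iff.mp hf'
        by_cases hT0 : T = ∅
        · subst hT0; rw [h0] at hTU; exact hNU hTU
        · rw [hmid T hT0 hTu] at hTU; exact hnu T hT0 hTu hTU
      by_cases hT0 : T = ∅
      · exfalso
        subst hT0
        rw [h0] at hf'
        have : f S = ∅ := Finset.subset_empty.mp hf'
        rw [hmid S hS0 hSu] at this
        exact hne S hS0 hSu this
      · rw [hmid S hS0 hSu, hmid T hT0 hTu] at hf'
        exact hrev S T hS0 hSu hT0 hTu hf'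
  have hinj : Function.Injective f := by
    intro S T h
    exact Finset.Subset.antisymm ((hiff S T).mpr h.le) ((hiff T S).mpr h.ge)
  exact ⟨f, hinj, hiff, hmid, h0, hU⟩

/-- The key tool: if there is no quasi-blue copy of `Q n`, then every interval cube
`[A, A ∪ V]` with `|V| = n` contains a red set other than `∅` and `univ`. -/
lemma tool {n N : ℕ} (hn : 0 < n) (c : Finset (Fin N) → Bool)
    (hq : ¬ HasQuasiBlueCopy n N c) {A V : Finset (Fin N)}
    (hd : Disjoint A V) (hV : V.card = n) :
    ∃ Z, A ⊆ Z ∧ Z ⊆ A ∪ V ∧ Z ≠ ∅ ∧ Z ≠ Finset.univ ∧ c Z = true := by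
  classical
  by_contra hno
  push_neg at hno
  apply hq
  have hNpos : 0 < N := by
    have h1 : V.card ≤ (Finset.univ : Finset (Fin N)).card := Finset.card_le_univ V
    rw [Finset.card_univ, Fintype.card_fin] at h1
    omega
  set v : Fin n → Fin N := fun i => ((V.orderIsoOfFin hV i : V) : Fin N) with hv
  have hvV : ∀ i, v i ∈ V := fun i => (V.orderIsoOfFin hV i).2
  have hvinj : Function.Injective v := by
    intro a b h
    have : (V.orderIsoOfFin hV a : V) = (V.orderIsoOfFin hV b : V) := Subtype.ext h
    exact (V.orderIsoOfFin hV).injective this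
  set body : Finset (Fin n) → Finset (Fin N) := fun S => A ∪ S.image v with hbody
  have hbx : ∀ S i, v i ∈ body S ↔ i ∈ S := by
    intro S i
    constructor
    · intro h
      rcases Finset.mem_union.mp h with h | h
      · exact absurd h (Finset.disjoint_right.mp hd (hvV i))
      · rcases Finset.mem_image.mp h with ⟨j, hj, hji⟩
        rwa [← hvinj hji]
    · intro h
      exact Finset.mem_union.mpr (Or.inr (Finset.mem_image_of_mem v h))
  have hsubAV : ∀ S, body S ⊆ A ∪ V := by
    intro S
    apply Finset.union_subset (Finset.subset_union_left)
    intro y hy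
    rcases Finset.mem_image.mp hy with ⟨j, _, hji⟩
    exact Finset.mem_union.mpr (Or.inr (hji ▸ hvV j))
  have hne : ∀ S : Finset (Fin n), S ≠ ∅ → S ≠ Finset.univ → body S ≠ ∅ := by
    intro S h1 _ h
    rcases Finset.nonempty_iff_ne_empty.mpr h1 with ⟨i, hi⟩
    have : v i ∈ body S := (hbx S i).mpr hi
    rw [h] at this
    exact absurd this (Finset.notMem_empty _)
  have hnu : ∀ S : Finset (Fin n), S ≠ ∅ → S ≠ Finset.univ → body S ≠ Finset.univ := by
    intro S _ h2 h
    have : ∃ j, j ∉ S := by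
      by_contra hc
      push_neg at hc
      exact h2 (Finset.eq_univ_iff_forall.mpr hc)
    rcases this with ⟨j, hj⟩
    have : v j ∈ body S := h ▸ Finset.mem_univ _
    exact hj ((hbx S j).mp this)
  have hmono : ∀ S T : Finset (Fin n), S ≠ ∅ → S ≠ Finset.univ → T ≠ ∅ →
      T ≠ Finset.univ → S ⊆ T → body S ⊆ body T := by
    intro S T _ _ _ _ h
    exact Finset.union_subset_union_right (Finset.image_subset_image h)
  have hrev : ∀ S T : Finset (Fin n), S ≠ ∅ → S ≠ Finset.univ → T ≠ ∅ →
      T ≠ Finset.univ → body S ⊆ body T → S ⊆ T := by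
    intro S T _ _ _ _ h i hi
    exact (hbx T i).mp (h ((hbx S i).mpr hi))
  obtain ⟨f, hinj, hiff, hmid, h0, hU⟩ := glue hn hNpos body hne hnu hmono hrev
  refine ⟨f, hinj, hiff, ?_⟩
  intro S hS1 hS2
  by_cases h1 : S = ∅
  · exact absurd (h1 ▸ h0) hS1
  by_cases h2 : S = Finset.univ
  · exact absurd (h2 ▸ hU) hS2
  rw [hmid S h1 h2]
  have := hno (body S) Finset.subset_union_left (hsubAV S) (Finset.nonempty_iff_ne_empty.mpr (hne S h1 h2)) (hnu S h1 h2)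
  cases hcb : c (body S)
  · rfl
  · exact absurd hcb this


/-- The construction: given no quasi-blue copy of `Q n` and `n` red singletons,
build a quasi-red copy of `Q n`. -/
lemma build {n N : ℕ} (hn : 3 ≤ n) (hN : n ^ 2 - n ≤ N)
    (c : Finset (Fin N) → Bool)
    (hq : ¬ HasQuasiBlueCopy n N c)
    (x : Fin n → Fin N) (hxinj : Function.Injective x)
    (hxred : ∀ i, c {x i} = true) :
    HasQuasiRedCopy n N c := by
  classical
  have hp2 : n ^ 2 = n * n := by ring
  have h3n : 3 * n ≤ n * n := Nat.mul_le_mul_right n hn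
  have hNn : n * n - n ≤ N := by omega
  have hNpos : 0 < N := by omega
  have hnpos : 0 < n := by omega
  set X : Finset (Fin N) := Finset.univ.image x with hX
  have hXcard : X.card = n := by
    rw [hX, Finset.card_image_of_injective _ hxinj, Finset.card_univ, Fintype.card_fin]
  set M : ℕ := (n - 3) * n with hM
  have hMval : M = n * n - 3 * n := by rw [hM, Nat.sub_mul]
  have hcompl : M ≤ ((Finset.univ : Finset (Fin N)) \ X).card := by
    rw [Finset.card_sdiff_of_subset (Finset.subset_univ X), Finset.card_univ, Fintype.card_fin, hXcard]
    omega
  obtain ⟨T, hTsub, hTcard⟩ := Finset.exists_subset_card_eq hcompl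
  set G : ℕ → Fin N := fun k =>
    if h : k < M then ((T.orderIsoOfFin hTcard ⟨k, h⟩ : T) : Fin N) else x ⟨0, hnpos⟩ with hG
  have hGT : ∀ k, k < M → G k ∈ T := by
    intro k hk
    simp only [hG, dif_pos hk]
    exact (T.orderIsoOfFin hTcard ⟨k, hk⟩).2
  have hGinj : ∀ k l, k < M → l < M → G k = G l → k = l := by
    intro k l hk hl h
    simp only [hG, dif_pos hk, dif_pos hl] at h
    have := (T.orderIsoOfFin hTcard).injective (Subtype.ext h)
    exact Fin.mk_eq_mk.mp this
  have hGX : ∀ k, k < M → ∀ i, G k ≠ x i := by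
    intro k hk i h
    have h1 : G k ∈ T := hGT k hk
    have h2 := hTsub h1
    rw [Finset.mem_sdiff] at h2
    exact h2.2 (h ▸ Finset.mem_image_of_mem x (Finset.mem_univ i))
  set seg : ℕ → Finset (Fin N) := fun k => (Finset.range k).image G with hseg
  have hsegmono : ∀ {k l}, k ≤ l → seg k ⊆ seg l := by
    intro k l h
    exact Finset.image_subset_image (by intro a ha; rw [Finset.mem_range] at *; omega)
  have hsegcard : ∀ k, k ≤ M → (seg k).card = k := by
    intro k hk
    rw [hseg]
    rw [Finset.card_image_of_injOn, Finset.card_range]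
    intro a ha b hb h
    rw [Finset.coe_range, Set.mem_Iio] at ha hb
    exact hGinj a b (by omega) (by omega) h
  have hsegX : ∀ k, k ≤ M → ∀ i, x i ∉ seg k := by
    intro k hk i h
    rcases Finset.mem_image.mp h with ⟨j, hj, hji⟩
    rw [Finset.mem_range] at hj
    exact hGX j (by omega) i hji
  have hsegT : ∀ k, k ≤ M → seg k ⊆ T := by
    intro k hk y hy
    rcases Finset.mem_image.mp hy with ⟨j, hj, hji⟩
    rw [Finset.mem_range] at hj
    exact hji ▸ hGT j (by omega)
  set A : Finset (Fin n) → Finset (Fin N) := fun S => S.image x ∪ seg ((S.card - 2) * n)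
    with hA
  have hAle : ∀ S : Finset (Fin n), S.card ≤ n - 1 → (S.card - 2) * n ≤ M := by
    intro S h
    rw [hM]
    exact Nat.mul_le_mul_right n (by omega)
  -- x-membership in A
  have hAx : ∀ (S : Finset (Fin n)), S.card ≤ n - 1 → ∀ i, (x i ∈ A S ↔ i ∈ S) := by
    intro S hS i
    constructor
    · intro h
      rcases Finset.mem_union.mp h with h | h
      · rcases Finset.mem_image.mp h with ⟨j, hj, hji⟩
        rwa [← hxinj hji]
      · exact absurd h (hsegX _ (hAle S hS) i)
    · intro h
      exact Finset.mem_union.mpr (Or.inl (Finset.mem_image_of_mem x h))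
  -- the coatom free-space estimate
  have hco : ∀ S : Finset (Fin n), S.card = n - 1 →
      n ≤ ((Finset.univ : Finset (Fin N)) \ (A S ∪ Sᶜ.image x)).card := by
    intro S hS
    have h1 : (A S).card ≤ (n - 1) + M := by
      calc (A S).card ≤ (S.image x).card + (seg ((S.card - 2) * n)).card :=
            Finset.card_union_le _ _
        _ ≤ (n - 1) + M := by
            have := Finset.card_image_le (s := S) (f := x)
            have h2 := hsegcard ((S.card - 2) * n) (hAle S (le_of_eq hS))
            have h3 : (S.card - 2) * n ≤ M := hAle S (le_of_eq hS)
            omega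
    have h2 : (Sᶜ.image x).card ≤ 1 := by
      have h3 : (Sᶜ : Finset (Fin n)).card = 1 := by
        rw [Finset.card_compl, Fintype.card_fin, hS]; omega
      calc (Sᶜ.image x).card ≤ Sᶜ.card := Finset.card_image_le
        _ = 1 := h3
    have h4 : (A S ∪ Sᶜ.image x).card ≤ (n - 1) + M + 1 := by
      have := Finset.card_union_le (A S) (Sᶜ.image x)
      omega
    rw [Finset.card_sdiff_of_subset (Finset.subset_univ _), Finset.card_univ, Fintype.card_fin]
    omega
  set V : Finset (Fin n) → Finset (Fin N) := fun S =>
    if S.card ≤ n - 2 then seg ((S.card - 1) * n) \ seg ((S.card - 2) * n)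
    else if h : n ≤ ((Finset.univ : Finset (Fin N)) \ (A S ∪ Sᶜ.image x)).card then
      (Finset.exists_subset_card_eq h).choose
    else ∅ with hV
  -- basic properties of V in the two regimes
  have hwin_le : ∀ S : Finset (Fin n), 2 ≤ S.card → S.card ≤ n - 2 →
      (S.card - 1) * n ≤ M := by
    intro S h2 h1
    rw [hM]; exact Nat.mul_le_mul_right n (by omega)
  have hVwin : ∀ S : Finset (Fin n), 2 ≤ S.card → S.card ≤ n - 2 →
      V S = seg ((S.card - 1) * n) \ seg ((S.card - 2) * n) := by
    intro S h2 h1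
    rw [hV]; simp only [if_pos h1]
  have hVco : ∀ S : Finset (Fin n), S.card = n - 1 →
      V S ⊆ (Finset.univ : Finset (Fin N)) \ (A S ∪ Sᶜ.image x) ∧ (V S).card = n := by
    intro S hS
    have hnot : ¬ (S.card ≤ n - 2) := by omega
    have h := hco S hS
    rw [hV]
    simp only [if_neg hnot, dif_pos h]
    exact ⟨(Finset.exists_subset_card_eq h).choose_spec.1,
      (Finset.exists_subset_card_eq h).choose_spec.2⟩
  have hVcard : ∀ S : Finset (Fin n), 2 ≤ S.card → S.card ≤ n - 1 → (V S).card = n := by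
    intro S h2 h1
    by_cases hc : S.card ≤ n - 2
    · rw [hVwin S h2 hc]
      have hmono' := hsegmono (k := (S.card - 2) * n) (l := (S.card - 1) * n)
        (Nat.mul_le_mul_right n (by omega))
      rw [Finset.card_sdiff_of_subset hmono', hsegcard _ (hwin_le S h2 hc),
        hsegcard _ (hAle S h1)]
      have : S.card - 1 = (S.card - 2) + 1 := by omega
      rw [this, Nat.succ_mul]
      omega
    · exact (hVco S (by omega)).2
  have hVdisj : ∀ S : Finset (Fin n), 2 ≤ S.card → S.card ≤ n - 1 →
      Disjoint (A S) (V S) := by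
    intro S h2 h1
    by_cases hc : S.card ≤ n - 2
    · rw [hVwin S h2 hc]
      rw [Finset.disjoint_left]
      intro y hy hy2
      rw [Finset.mem_sdiff] at hy2
      rcases Finset.mem_union.mp hy with h | h
      · rcases Finset.mem_image.mp h with ⟨j, hj, hji⟩
        exact hsegX _ (hwin_le S h2 hc) j (hji ▸ hy2.1)
      · exact hy2.2 h
    · have hS : S.card = n - 1 := by omega
      rw [Finset.disjoint_left]
      intro y hy hy2
      have := (hVco S hS).1 hy2
      rw [Finset.mem_sdiff] at this
      exact this.2 (Finset.mem_union.mpr (Or.inl hy))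
  have hVX : ∀ S : Finset (Fin n), 2 ≤ S.card → S.card ≤ n - 1 →
      ∀ i, x i ∉ V S := by
    intro S h2 h1 i hi
    by_cases hc : S.card ≤ n - 2
    · rw [hVwin S h2 hc] at hi
      rw [Finset.mem_sdiff] at hi
      exact hsegX _ (hwin_le S h2 hc) i hi.1
    · have hS : S.card = n - 1 := by omega
      have := (hVco S hS).1 hi
      rw [Finset.mem_sdiff, Finset.mem_union] at this
      by_cases hiS : i ∈ S
      · exact this.2 (Or.inl ((hAx S h1 i).mpr hiS))
      · exact this.2 (Or.inr (Finset.mem_image_of_mem x (Finset.mem_compl.mpr hiS)))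
  -- the middle images
  set F : Finset (Fin n) → Finset (Fin N) := fun S =>
    if S.card ≤ 1 then S.image x
    else if h : Disjoint (A S) (V S) ∧ (V S).card = n then
      (tool hnpos c hq h.1 h.2).choose
    else ∅ with hF
  have hcardmid : ∀ S : Finset (Fin n), S ≠ ∅ → S ≠ Finset.univ →
      1 ≤ S.card ∧ S.card ≤ n - 1 := by
    intro S h1 h2
    constructor
    · exact Finset.card_pos.mpr (Finset.nonempty_iff_ne_empty.mpr h1)
    · have hle : S.card ≤ n := by
        have := Finset.card_le_univ S
        simpa using this
      have hne : S.card ≠ n := by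
        intro h
        exact h2 (Finset.eq_univ_of_card S (by rw [h, Fintype.card_fin]))
      omega
  have hFspec : ∀ S : Finset (Fin n), 2 ≤ S.card → S.card ≤ n - 1 →
      A S ⊆ F S ∧ F S ⊆ A S ∪ V S ∧ F S ≠ ∅ ∧ F S ≠ Finset.univ ∧ c (F S) = true := by
    intro S h2 h1
    have hd := hVdisj S h2 h1
    have hcv := hVcard S h2 h1
    rw [hF]
    simp only [if_neg (by omega : ¬ (S.card ≤ 1)), dif_pos (And.intro hd hcv)]
    exact (tool hnpos c hq hd hcv).choose_spec
  have hF1 : ∀ S : Finset (Fin n), S.card = 1 → F S = S.image x := by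
    intro S h
    rw [hF]; simp only [if_pos (le_of_eq h)]
  -- x-membership in F
  have hFx : ∀ S : Finset (Fin n), S ≠ ∅ → S ≠ Finset.univ →
      ∀ i, (x i ∈ F S ↔ i ∈ S) := by
    intro S h1 h2 i
    obtain ⟨hc1, hc2⟩ := hcardmid S h1 h2
    by_cases hone : S.card = 1
    · rw [hF1 S hone]
      constructor
      · intro h
        rcases Finset.mem_image.mp h with ⟨j, hj, hji⟩
        rwa [← hxinj hji]
      · exact fun h => Finset.mem_image_of_mem x h
    · have h2' : 2 ≤ S.card := by omega
      obtain ⟨hsub1, hsub2, _, _, _⟩ := hFspec S h2' hc2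
      constructor
      · intro h
        rcases Finset.mem_union.mp (hsub2 h) with h | h
        · exact (hAx S hc2 i).mp h
        · exact absurd h (hVX S h2' hc2 i)
      · intro h
        exact hsub1 ((hAx S hc2 i).mpr h)
  have hFne : ∀ S : Finset (Fin n), S ≠ ∅ → S ≠ Finset.univ → F S ≠ ∅ := by
    intro S h1 h2
    obtain ⟨i, hi⟩ := Finset.nonempty_iff_ne_empty.mpr h1
    intro h
    have := (hFx S h1 h2 i).mpr hi
    rw [h] at this
    exact Finset.notMem_empty _ this
  have hFnu : ∀ S : Finset (Fin n), S ≠ ∅ → S ≠ Finset.univ → F S ≠ Finset.univ := by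
    intro S h1 h2 h
    have : ∃ j, j ∉ S := by
      by_contra hcc
      push_neg at hcc
      exact h2 (Finset.eq_univ_iff_forall.mpr hcc)
    rcases this with ⟨j, hj⟩
    have : x j ∈ F S := h ▸ Finset.mem_univ _
    exact hj ((hFx S h1 h2 j).mp this)
  have hFmono : ∀ S T : Finset (Fin n), S ≠ ∅ → S ≠ Finset.univ → T ≠ ∅ →
      T ≠ Finset.univ → S ⊆ T → F S ⊆ F T := by
    intro S T hS1 hS2 hT1 hT2 hST
    by_cases heq : S = T
    · subst heq; exact subset_rfl
    have hlt : S.card < T.card := Finset.card_lt_card (Finset.ssubset_iff_subset_ne.mpr ⟨hST, heq⟩)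
    obtain ⟨hcS1, hcS2⟩ := hcardmid S hS1 hS2
    obtain ⟨hcT1, hcT2⟩ := hcardmid T hT1 hT2
    have hT2' : 2 ≤ T.card := by omega
    obtain ⟨hTsub1, _, _, _, _⟩ := hFspec T hT2' hcT2
    -- it suffices to show F S ⊆ A T
    have key : F S ⊆ A T := by
      have himg : S.image x ⊆ A T := by
        intro y hy
        rcases Finset.mem_image.mp hy with ⟨j, hj, hji⟩
        exact Finset.mem_union.mpr (Or.inl (hji ▸ Finset.mem_image_of_mem x (hST hj)))
      by_cases hone : S.card = 1
      · rw [hF1 S hone]; exact himg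
      · have hS2' : 2 ≤ S.card := by omega
        obtain ⟨_, hSsub2, _, _, _⟩ := hFspec S hS2' hcS2
        refine hSsub2.trans ?_
        apply Finset.union_subset
        · apply Finset.union_subset himg
          refine (hsegmono (Nat.mul_le_mul_right n (show S.card - 2 ≤ T.card - 2 by omega))).trans ?_
          exact Finset.subset_union_right
        · -- V S part: S.card ≤ n - 2 since S.card < T.card ≤ n - 1
          have hSn2 : S.card ≤ n - 2 := by omega
          rw [hVwin S hS2' hSn2]
          refine (Finset.sdiff_subset.trans
            (hsegmono (Nat.mul_le_mul_right n (by omega : S.card - 1 ≤ T.card - 2)))).trans ?_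
          exact Finset.subset_union_right
    exact key.trans hTsub1
  have hFrev : ∀ S T : Finset (Fin n), S ≠ ∅ → S ≠ Finset.univ → T ≠ ∅ →
      T ≠ Finset.univ → F S ⊆ F T → S ⊆ T := by
    intro S T hS1 hS2 hT1 hT2 h i hi
    exact (hFx T hT1 hT2 i).mp (h ((hFx S hS1 hS2 i).mpr hi))
  have hFred : ∀ S : Finset (Fin n), S ≠ ∅ → S ≠ Finset.univ → c (F S) = true := by
    intro S h1 h2
    obtain ⟨hc1, hc2⟩ := hcardmid S h1 h2
    by_cases hone : S.card = 1
    · rcases Finset.card_eq_one.mp hone with ⟨i, hi⟩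
      rw [hF1 S hone, hi, Finset.image_singleton]
      exact hxred i
    · exact (hFspec S (by omega) hc2).2.2.2.2
  obtain ⟨f, hinj, hiff, hmid, h0, hU⟩ :=
    glue hnpos hNpos F hFne hFnu hFmono hFrev
  refine ⟨f, hinj, hiff, ?_⟩
  intro S hS1 hS2
  by_cases h1 : S = ∅
  · exact absurd (h1 ▸ h0) hS1
  by_cases h2 : S = Finset.univ
  · exact absurd (h2 ▸ hU) hS2
  rw [hmid S h1 h2]
  exact hFred S h1 h2

end HatRamseyAux

/-- if n ≥ 3 and N ≥ n² − n, every 2-coloring of Q_N contains a copy of Q_n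
all of whose elements other than possibly ∅ and [N] are red, or one all of whose elements
other than possibly ∅ and [N] are blue; i.e. R̂(Q_n, Q_n) ≤ n² − n. -/
theorem hat_ramsey_Qn_Qn (n N : ℕ) (hn : 3 ≤ n) (hN : N ≥ n ^ 2 - n)
    (c : Finset (Fin N) → Bool) :
    HasQuasiRedCopy n N c ∨ HasQuasiBlueCopy n N c := by
  classical
  by_cases hB : HasQuasiBlueCopy n N c
  · exact Or.inr hB
  by_cases hR : HasQuasiRedCopy n N c
  · exact Or.inl hR
  have hp2 : n ^ 2 = n * n := by ring
  have h3n : 3 * n ≤ n * n := Nat.mul_le_mul_right n hn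
  have hNn : n * n - n ≤ N := by omega
  set R : Finset (Fin N) := Finset.univ.filter (fun y : Fin N => c {y} = true) with hRdef
  by_cases hcase : n ≤ R.card
  · -- at least n red singletons
    obtain ⟨R', hR'sub, hR'card⟩ := Finset.exists_subset_card_eq hcase
    set x : Fin n → Fin N := fun i => ((R'.orderIsoOfFin hR'card i : R') : Fin N) with hx
    have hxinj : Function.Injective x := by
      intro a b h
      exact (R'.orderIsoOfFin hR'card).injective (Subtype.ext h)
    have hxred : ∀ i, c {x i} = true := by
      intro i
      have h1 : x i ∈ R' := (R'.orderIsoOfFin hR'card i).2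
      have h2 := hR'sub h1
      rw [hRdef, Finset.mem_filter] at h2
      exact h2.2
    exact Or.inl (HatRamseyAux.build hn hN c hB x hxinj hxred)
  · -- at least n blue singletons
    set B : Finset (Fin N) := Finset.univ.filter (fun y : Fin N => ¬ (c {y} = true)) with hBdef
    have hsum : R.card + B.card = N := by
      rw [hRdef, hBdef, Finset.card_filter_add_card_filter_not,
        Finset.card_univ, Fintype.card_fin]
    have hcase' : n ≤ B.card := by omega
    obtain ⟨B', hB'sub, hB'card⟩ := Finset.exists_subset_card_eq hcase'
    set x : Fin n → Fin N := fun i => ((B'.orderIsoOfFin hB'card i : B') : Fin N) with hx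
    have hxinj : Function.Injective x := by
      intro a b h
      exact (B'.orderIsoOfFin hB'card).injective (Subtype.ext h)
    have hxblue : ∀ i, c {x i} = false := by
      intro i
      have h1 : x i ∈ B' := (B'.orderIsoOfFin hB'card i).2
      have h2 := hB'sub h1
      rw [hBdef, Finset.mem_filter] at h2
      cases hcb : c {x i}
      · rfl
      · exact absurd hcb h2.2
    set c' : Finset (Fin N) → Bool := fun S => ! c S with hc'
    have hq' : ¬ HasQuasiBlueCopy n N c' := by
      intro h
      apply hR
      obtain ⟨f, h1, h2, h3⟩ := h
      refine ⟨f, h1, h2, fun S hs1 hs2 => ?_⟩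
      have := h3 S hs1 hs2
      simp only [hc', Bool.not_eq_false'] at this
      exact this
    have hx'red : ∀ i, c' {x i} = true := by
      intro i
      simp only [hc', hxblue i, Bool.not_false]
    have hbuild := HatRamseyAux.build hn hN c' hq' x hxinj hx'red
    obtain ⟨f, h1, h2, h3⟩ := hbuild
    refine Or.inr ⟨f, h1, h2, fun S hs1 hs2 => ?_⟩
    have := h3 S hs1 hs2
    simp only [hc', Bool.not_eq_true'] at this
    exact this
end

section
/- The 2-coloring c of the Boolean lattice Q_4 defined by c(S) = blue if |S| is even and c(S) = red if |S| is odd contains no red copy of Q_2 and no blue copy of Q_3. Consequently R(Q_2, Q_3) > 4. -/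
/-- the parity coloring of Q_4 (blue on sets of even size, red on sets of
odd size) contains no red copy of Q_2 and no blue copy of Q_3; hence R(Q_2, Q_3) > 4. -/
theorem parity_coloring_Q4 :
    ¬ HasRedCopy 2 4 (fun S : Finset (Fin 4) => decide (Odd S.card)) ∧
    ¬ HasBlueCopy 3 4 (fun S : Finset (Fin 4) => decide (Odd S.card)) := by
  constructor
  · rintro ⟨f, hinj, hord, hcol⟩
    have step : ∀ S T : Finset (Fin 2), S ⊂ T → (f S).card < (f T).card := by
      intro S T h
      exact Finset.card_lt_card ⟨(hord S T).1 h.subset, fun hh => h.2 ((hord T S).2 hh)⟩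
    have hodd : ∀ S : Finset (Fin 2), (f S).card % 2 = 1 := fun S =>
      Nat.odd_iff.mp (by simpa using hcol S)
    have h1 := step ∅ {0} (by decide)
    have h2 := step {0} {0, 1} (by decide)
    have hb : (f {0, 1}).card ≤ 4 := by
      simpa using Finset.card_le_univ (f {0, 1})
    have o1 := hodd ∅
    have o2 := hodd {0}
    have o3 := hodd {0, 1}
    omega
  · rintro ⟨f, hinj, hord, hcol⟩
    have step : ∀ S T : Finset (Fin 3), S ⊂ T → (f S).card < (f T).card := by
      intro S T h
      exact Finset.card_lt_card ⟨(hord S T).1 h.subset, fun hh => h.2 ((hord T S).2 hh)⟩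
    have heven : ∀ S : Finset (Fin 3), (f S).card % 2 = 0 := fun S => by
      have := hcol S
      simp only [decide_eq_false_iff_not, Nat.odd_iff] at this
      omega
    have h1 := step ∅ {0} (by decide)
    have h2 := step {0} {0, 1} (by decide)
    have h3 := step {0, 1} {0, 1, 2} (by decide)
    have hb : (f {0, 1, 2}).card ≤ 4 := by
      simpa using Finset.card_le_univ (f {0, 1, 2})
    have e1 := heven ∅
    have e2 := heven {0}
    have e3 := heven {0, 1}
    have e4 := heven {0, 1, 2}
    omega
end

section
/- Let n ≥ 1 and ℓ ≥ 1 be integers and let N be an integer with N + 1 ≥ 2ℓ + n. Let c be a 2-coloring of the Boolean lattice Q_N, and suppose there exist red sets A₁, A₂, A₃ ⊆ [N], each of size at most ℓ − 1, such that for each i ∈ {1,2,3} there exists x_i ∈ A_i with x_i ∉ A_j for both j ≠ i. Then Q_N contains a copy of Q_3 all of whose elements other than possibly ∅ and [N] are red, or a copy of Q_n all of whose elements other than possibly ∅ and [N] are blue. -/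
/-- Key lemma: given a set `D` and an element `z ∉ D` with enough room left over,
either there is a red set containing `D` and avoiding `z`, or a quasi-blue copy of
`Q n` exists. -/
lemma exists_red_or_blue (n N : ℕ) (c : Finset (Fin N) → Bool)
    (D : Finset (Fin N)) (z : Fin N)
    (hcard : D.card + 1 + n ≤ N) (hz : z ∉ D) :
    (∃ R, D ⊆ R ∧ z ∉ R ∧ c R = true) ∨ HasQuasiBlueCopy n N c := by
  classical
  have hE : n ≤ ((insert z D)ᶜ : Finset (Fin N)).card := by
    rw [Finset.card_compl]
    have h1 : (insert z D).card ≤ D.card + 1 := Finset.card_insert_le _ _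
    have h2 : Fintype.card (Fin N) = N := Fintype.card_fin N
    omega
  obtain ⟨Y, hYsub, hYcard⟩ := Finset.exists_subset_card_eq hE
  set φ : Fin n → Fin N := fun i => ((Y.equivFinOfCardEq hYcard).symm i : Fin N) with hφ
  have hφinj : Function.Injective φ :=
    Subtype.val_injective.comp (Y.equivFinOfCardEq hYcard).symm.injective
  have hφmem : ∀ i, φ i ∈ Y := fun i => ((Y.equivFinOfCardEq hYcard).symm i).2
  have hφnotins : ∀ i, φ i ∉ insert z D := fun i => by
    have := hYsub (hφmem i); simpa [Finset.mem_compl] using this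
  set g : Finset (Fin n) → Finset (Fin N) := fun S => D ∪ S.image φ with hg
  have hmono : ∀ S T, S ⊆ T ↔ g S ⊆ g T := by
    intro S T
    constructor
    · intro h
      exact Finset.union_subset_union (le_refl D) (Finset.image_subset_image h)
    · intro h s hs
      have h1 : φ s ∈ D ∪ T.image φ := h (Finset.mem_union_right _ (Finset.mem_image_of_mem _ hs))
      rcases Finset.mem_union.mp h1 with h2 | h2
      · exact absurd (Finset.mem_insert_of_mem h2) (hφnotins s)
      · obtain ⟨t, ht, hts⟩ := Finset.mem_image.mp h2
        rwa [← hφinj hts]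
  have hinj : Function.Injective g := fun S T h =>
    Finset.Subset.antisymm ((hmono S T).mpr h.le) ((hmono T S).mpr h.ge)
  by_cases hall : ∀ S, c (g S) = false
  · exact Or.inr ⟨g, hinj, hmono, fun S _ _ => hall S⟩
  · push_neg at hall
    obtain ⟨S, hS⟩ := hall
    refine Or.inl ⟨g S, Finset.subset_union_left, ?_, ?_⟩
    · intro hzin
      rcases Finset.mem_union.mp hzin with h2 | h2
      · exact hz h2
      · obtain ⟨t, _, hts⟩ := Finset.mem_image.mp h2
        exact hφnotins t (hts ▸ Finset.mem_insert_self z D)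
    · simpa using hS

/-- if n, ℓ ≥ 1, N + 1 ≥ 2ℓ + n, and there are red sets A₁, A₂, A₃ of size
at most ℓ − 1 each containing a private element x_i ∉ A_j (j ≠ i), then Q_N contains a
copy of Q_3 red except possibly at ∅ and [N], or a copy of Q_n blue except possibly at
∅ and [N]. -/
theorem three_private_sets (n ℓ N : ℕ) (hn : 1 ≤ n) (hℓ : 1 ≤ ℓ)
    (hN : N + 1 ≥ 2 * ℓ + n)
    (c : Finset (Fin N) → Bool)
    (A : Fin 3 → Finset (Fin N))
    (hred : ∀ i, c (A i) = true)
    (hcard : ∀ i, (A i).card ≤ ℓ - 1)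
    (hpriv : ∀ i, ∃ x ∈ A i, ∀ j, j ≠ i → x ∉ A j) :
    HasQuasiRedCopy 3 N c ∨ HasQuasiBlueCopy n N c := by
  classical
  choose x hx1 hx2 using hpriv
  have key : ∀ i j k : Fin 3, i ≠ k → j ≠ k →
      (∃ R, A i ∪ A j ⊆ R ∧ x k ∉ R ∧ c R = true) ∨ HasQuasiBlueCopy n N c := by
    intro i j k hik hjk
    apply exists_red_or_blue
    · have h1 := hcard i
      have h2 := hcard j
      have h3 : (A i ∪ A j).card ≤ (A i).card + (A j).card := Finset.card_union_le _ _
      omega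
    · simp only [Finset.mem_union]
      rintro (h | h)
      · exact hx2 k i hik h
      · exact hx2 k j hjk h
  rcases key 0 1 2 (by decide) (by decide) with ⟨Q01, h01, n01, r01⟩ | hb
  · rcases key 0 2 1 (by decide) (by decide) with ⟨Q02, h02, n02, r02⟩ | hb
    · rcases key 1 2 0 (by decide) (by decide) with ⟨Q12, h12, n12, r12⟩ | hb
      · left
        -- subset facts
        have sA0Q01 : A 0 ⊆ Q01 := (Finset.union_subset_iff.mp h01).1
        have sA1Q01 : A 1 ⊆ Q01 := (Finset.union_subset_iff.mp h01).2
        have sA0Q02 : A 0 ⊆ Q02 := (Finset.union_subset_iff.mp h02).1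
        have sA2Q02 : A 2 ⊆ Q02 := (Finset.union_subset_iff.mp h02).2
        have sA1Q12 : A 1 ⊆ Q12 := (Finset.union_subset_iff.mp h12).1
        have sA2Q12 : A 2 ⊆ Q12 := (Finset.union_subset_iff.mp h12).2
        -- membership facts
        have m0A0 : x 0 ∈ A 0 := hx1 0
        have m1A1 : x 1 ∈ A 1 := hx1 1
        have m2A2 : x 2 ∈ A 2 := hx1 2
        have m0Q01 : x 0 ∈ Q01 := sA0Q01 m0A0
        have m1Q01 : x 1 ∈ Q01 := sA1Q01 m1A1
        have m0Q02 : x 0 ∈ Q02 := sA0Q02 m0A0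
        have m2Q02 : x 2 ∈ Q02 := sA2Q02 m2A2
        have m1Q12 : x 1 ∈ Q12 := sA1Q12 m1A1
        have m2Q12 : x 2 ∈ Q12 := sA2Q12 m2A2
        -- non-membership facts
        have n0A1 : x 0 ∉ A 1 := hx2 0 1 (by decide)
        have n0A2 : x 0 ∉ A 2 := hx2 0 2 (by decide)
        have n1A0 : x 1 ∉ A 0 := hx2 1 0 (by decide)
        have n1A2 : x 1 ∉ A 2 := hx2 1 2 (by decide)
        have n2A0 : x 2 ∉ A 0 := hx2 2 0 (by decide)
        have n2A1 : x 2 ∉ A 1 := hx2 2 1 (by decide)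
        set f : Finset (Fin 3) → Finset (Fin N) := fun S =>
          if S = {0} then A 0 else if S = {1} then A 1 else if S = {2} then A 2
          else if S = {0, 1} then Q01 else if S = {0, 2} then Q02
          else if S = {1, 2} then Q12
          else if S = ∅ then ∅ else Finset.univ with hfdef
        have e0 : f ∅ = ∅ := rfl
        have e1 : f {0} = A 0 := rfl
        have e2 : f {1} = A 1 := rfl
        have e3 : f {2} = A 2 := rfl
        have e4 : f {0, 1} = Q01 := rfl
        have e5 : f {0, 2} = Q02 := rfl
        have e6 : f {1, 2} = Q12 := rfl
        have e7 : f {0, 1, 2} = Finset.univ := rfl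
        have enum : ∀ S : Finset (Fin 3), S = ∅ ∨ S = {0} ∨ S = {1} ∨ S = {2} ∨
            S = {0, 1} ∨ S = {0, 2} ∨ S = {1, 2} ∨ S = {0, 1, 2} := by decide
        have hiff : ∀ S T : Finset (Fin 3), S ⊆ T ↔ f S ⊆ f T := by
          intro S T
          rcases enum S with rfl | rfl | rfl | rfl | rfl | rfl | rfl | rfl <;>
            rcases enum T with rfl | rfl | rfl | rfl | rfl | rfl | rfl | rfl
          · simp only [e0, e1, e2, e3, e4, e5, e6, e7]
            exact iff_of_true (by decide) (Finset.empty_subset _)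
          · simp only [e0, e1, e2, e3, e4, e5, e6, e7]
            exact iff_of_true (by decide) (Finset.empty_subset _)
          · simp only [e0, e1, e2, e3, e4, e5, e6, e7]
            exact iff_of_true (by decide) (Finset.empty_subset _)
          · simp only [e0, e1, e2, e3, e4, e5, e6, e7]
            exact iff_of_true (by decide) (Finset.empty_subset _)
          · simp only [e0, e1, e2, e3, e4, e5, e6, e7]
            exact iff_of_true (by decide) (Finset.empty_subset _)
          · simp only [e0, e1, e2, e3, e4, e5, e6, e7]
            exact iff_of_true (by decide) (Finset.empty_subset _)
          · simp only [e0, e1, e2, e3, e4, e5, e6, e7]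
            exact iff_of_true (by decide) (Finset.empty_subset _)
          · simp only [e0, e1, e2, e3, e4, e5, e6, e7]
            exact iff_of_true (by decide) (Finset.empty_subset _)
          · simp only [e0, e1, e2, e3, e4, e5, e6, e7]
            exact iff_of_false (by decide) fun hsub => (Finset.notMem_empty _) (hsub m0A0)
          · simp only [e0, e1, e2, e3, e4, e5, e6, e7]
            exact iff_of_true (by decide) (Finset.Subset.refl _)
          · simp only [e0, e1, e2, e3, e4, e5, e6, e7]
            exact iff_of_false (by decide) fun hsub => n0A1 (hsub m0A0)
          · simp only [e0, e1, e2, e3, e4, e5, e6, e7]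
            exact iff_of_false (by decide) fun hsub => n0A2 (hsub m0A0)
          · simp only [e0, e1, e2, e3, e4, e5, e6, e7]
            exact iff_of_true (by decide) (sA0Q01)
          · simp only [e0, e1, e2, e3, e4, e5, e6, e7]
            exact iff_of_true (by decide) (sA0Q02)
          · simp only [e0, e1, e2, e3, e4, e5, e6, e7]
            exact iff_of_false (by decide) fun hsub => n12 (hsub m0A0)
          · simp only [e0, e1, e2, e3, e4, e5, e6, e7]
            exact iff_of_true (by decide) (Finset.subset_univ _)
          · simp only [e0, e1, e2, e3, e4, e5, e6, e7]
            exact iff_of_false (by decide) fun hsub => (Finset.notMem_empty _) (hsub m1A1)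
          · simp only [e0, e1, e2, e3, e4, e5, e6, e7]
            exact iff_of_false (by decide) fun hsub => n1A0 (hsub m1A1)
          · simp only [e0, e1, e2, e3, e4, e5, e6, e7]
            exact iff_of_true (by decide) (Finset.Subset.refl _)
          · simp only [e0, e1, e2, e3, e4, e5, e6, e7]
            exact iff_of_false (by decide) fun hsub => n1A2 (hsub m1A1)
          · simp only [e0, e1, e2, e3, e4, e5, e6, e7]
            exact iff_of_true (by decide) (sA1Q01)
          · simp only [e0, e1, e2, e3, e4, e5, e6, e7]
            exact iff_of_false (by decide) fun hsub => n02 (hsub m1A1)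
          · simp only [e0, e1, e2, e3, e4, e5, e6, e7]
            exact iff_of_true (by decide) (sA1Q12)
          · simp only [e0, e1, e2, e3, e4, e5, e6, e7]
            exact iff_of_true (by decide) (Finset.subset_univ _)
          · simp only [e0, e1, e2, e3, e4, e5, e6, e7]
            exact iff_of_false (by decide) fun hsub => (Finset.notMem_empty _) (hsub m2A2)
          · simp only [e0, e1, e2, e3, e4, e5, e6, e7]
            exact iff_of_false (by decide) fun hsub => n2A0 (hsub m2A2)
          · simp only [e0, e1, e2, e3, e4, e5, e6, e7]
            exact iff_of_false (by decide) fun hsub => n2A1 (hsub m2A2)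
          · simp only [e0, e1, e2, e3, e4, e5, e6, e7]
            exact iff_of_true (by decide) (Finset.Subset.refl _)
          · simp only [e0, e1, e2, e3, e4, e5, e6, e7]
            exact iff_of_false (by decide) fun hsub => n01 (hsub m2A2)
          · simp only [e0, e1, e2, e3, e4, e5, e6, e7]
            exact iff_of_true (by decide) (sA2Q02)
          · simp only [e0, e1, e2, e3, e4, e5, e6, e7]
            exact iff_of_true (by decide) (sA2Q12)
          · simp only [e0, e1, e2, e3, e4, e5, e6, e7]
            exact iff_of_true (by decide) (Finset.subset_univ _)
          · simp only [e0, e1, e2, e3, e4, e5, e6, e7]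
            exact iff_of_false (by decide) fun hsub => (Finset.notMem_empty _) (hsub m0Q01)
          · simp only [e0, e1, e2, e3, e4, e5, e6, e7]
            exact iff_of_false (by decide) fun hsub => n1A0 (hsub m1Q01)
          · simp only [e0, e1, e2, e3, e4, e5, e6, e7]
            exact iff_of_false (by decide) fun hsub => n0A1 (hsub m0Q01)
          · simp only [e0, e1, e2, e3, e4, e5, e6, e7]
            exact iff_of_false (by decide) fun hsub => n0A2 (hsub m0Q01)
          · simp only [e0, e1, e2, e3, e4, e5, e6, e7]
            exact iff_of_true (by decide) (Finset.Subset.refl _)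
          · simp only [e0, e1, e2, e3, e4, e5, e6, e7]
            exact iff_of_false (by decide) fun hsub => n02 (hsub m1Q01)
          · simp only [e0, e1, e2, e3, e4, e5, e6, e7]
            exact iff_of_false (by decide) fun hsub => n12 (hsub m0Q01)
          · simp only [e0, e1, e2, e3, e4, e5, e6, e7]
            exact iff_of_true (by decide) (Finset.subset_univ _)
          · simp only [e0, e1, e2, e3, e4, e5, e6, e7]
            exact iff_of_false (by decide) fun hsub => (Finset.notMem_empty _) (hsub m0Q02)
          · simp only [e0, e1, e2, e3, e4, e5, e6, e7]
            exact iff_of_false (by decide) fun hsub => n2A0 (hsub m2Q02)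
          · simp only [e0, e1, e2, e3, e4, e5, e6, e7]
            exact iff_of_false (by decide) fun hsub => n0A1 (hsub m0Q02)
          · simp only [e0, e1, e2, e3, e4, e5, e6, e7]
            exact iff_of_false (by decide) fun hsub => n0A2 (hsub m0Q02)
          · simp only [e0, e1, e2, e3, e4, e5, e6, e7]
            exact iff_of_false (by decide) fun hsub => n01 (hsub m2Q02)
          · simp only [e0, e1, e2, e3, e4, e5, e6, e7]
            exact iff_of_true (by decide) (Finset.Subset.refl _)
          · simp only [e0, e1, e2, e3, e4, e5, e6, e7]
            exact iff_of_false (by decide) fun hsub => n12 (hsub m0Q02)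
          · simp only [e0, e1, e2, e3, e4, e5, e6, e7]
            exact iff_of_true (by decide) (Finset.subset_univ _)
          · simp only [e0, e1, e2, e3, e4, e5, e6, e7]
            exact iff_of_false (by decide) fun hsub => (Finset.notMem_empty _) (hsub m1Q12)
          · simp only [e0, e1, e2, e3, e4, e5, e6, e7]
            exact iff_of_false (by decide) fun hsub => n1A0 (hsub m1Q12)
          · simp only [e0, e1, e2, e3, e4, e5, e6, e7]
            exact iff_of_false (by decide) fun hsub => n2A1 (hsub m2Q12)
          · simp only [e0, e1, e2, e3, e4, e5, e6, e7]
            exact iff_of_false (by decide) fun hsub => n1A2 (hsub m1Q12)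
          · simp only [e0, e1, e2, e3, e4, e5, e6, e7]
            exact iff_of_false (by decide) fun hsub => n01 (hsub m2Q12)
          · simp only [e0, e1, e2, e3, e4, e5, e6, e7]
            exact iff_of_false (by decide) fun hsub => n02 (hsub m1Q12)
          · simp only [e0, e1, e2, e3, e4, e5, e6, e7]
            exact iff_of_true (by decide) (Finset.Subset.refl _)
          · simp only [e0, e1, e2, e3, e4, e5, e6, e7]
            exact iff_of_true (by decide) (Finset.subset_univ _)
          · simp only [e0, e1, e2, e3, e4, e5, e6, e7]
            exact iff_of_false (by decide) fun hsub => (Finset.notMem_empty (x 0)) (hsub (Finset.mem_univ _))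
          · simp only [e0, e1, e2, e3, e4, e5, e6, e7]
            exact iff_of_false (by decide) fun hsub => n1A0 (hsub (Finset.mem_univ _))
          · simp only [e0, e1, e2, e3, e4, e5, e6, e7]
            exact iff_of_false (by decide) fun hsub => n0A1 (hsub (Finset.mem_univ _))
          · simp only [e0, e1, e2, e3, e4, e5, e6, e7]
            exact iff_of_false (by decide) fun hsub => n0A2 (hsub (Finset.mem_univ _))
          · simp only [e0, e1, e2, e3, e4, e5, e6, e7]
            exact iff_of_false (by decide) fun hsub => n01 (hsub (Finset.mem_univ _))
          · simp only [e0, e1, e2, e3, e4, e5, e6, e7]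
            exact iff_of_false (by decide) fun hsub => n02 (hsub (Finset.mem_univ _))
          · simp only [e0, e1, e2, e3, e4, e5, e6, e7]
            exact iff_of_false (by decide) fun hsub => n12 (hsub (Finset.mem_univ _))
          · simp only [e0, e1, e2, e3, e4, e5, e6, e7]
            exact iff_of_true (by decide) (Finset.subset_univ _)
        have hinj : Function.Injective f := by
          intro S T h
          exact Finset.Subset.antisymm ((hiff S T).mpr (by rw [h]))
            ((hiff T S).mpr (by rw [h]))
        refine ⟨f, hinj, hiff, ?_⟩
        intro S
        rcases enum S with rfl | rfl | rfl | rfl | rfl | rfl | rfl | rfl <;>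
          simp only [e0, e1, e2, e3, e4, e5, e6, e7] <;> intro h1 h2
        · exact absurd rfl h1
        · exact hred 0
        · exact hred 1
        · exact hred 2
        · exact r01
        · exact r02
        · exact r12
        · exact absurd rfl h2
      · exact Or.inr hb
    · exact Or.inr hb
  · exact Or.inr hb
end

section
/- Let m ≥ 3, n ≥ 1 and ℓ ≥ 1 be integers and let N be an integer with N ≥ m(ℓ − 1) + (m − 2)n. Let c be a 2-coloring of the Boolean lattice Q_N, and suppose there exist red sets A₁, …, A_m ⊆ [N], each of size at most ℓ − 1, such that for each i ∈ [m] there exists x_i ∈ A_i with x_i ∉ A_j for all j ∈ [m] \ {i}. Then Q_N contains a copy of Q_m all of whose elements other than possibly ∅ and [N] are red, or a copy of Q_n all of whose elements other than possibly ∅ and [N] are blue. -/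
lemma exists_red_above {n N : ℕ} {c : Finset (Fin N) → Bool}
    (hblue : ¬ HasQuasiBlueCopy n N c)
    (C : Finset (Fin N)) (ι : Fin n → Fin N) (hι : Function.Injective ι)
    (hd : ∀ t, ι t ∉ C) :
    ∃ T : Finset (Fin n), c (C ∪ T.image ι) = true := by
  by_contra hcon
  push_neg at hcon
  apply hblue
  have hiff : ∀ S T : Finset (Fin n), S ⊆ T ↔ C ∪ S.image ι ⊆ C ∪ T.image ι := by
    intro S T
    constructor
    · intro h
      exact Finset.union_subset_union_right (Finset.image_subset_image h)
    · intro h s hs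
      have h1 : ι s ∈ C ∪ T.image ι :=
        h (Finset.mem_union_right _ (Finset.mem_image_of_mem ι hs))
      rcases Finset.mem_union.1 h1 with h' | h'
      · exact absurd h' (hd s)
      · obtain ⟨t, ht, he⟩ := Finset.mem_image.1 h'
        rwa [hι he] at ht
  refine ⟨fun T => C ∪ T.image ι, ?_, hiff, ?_⟩
  · intro S T h
    exact Finset.Subset.antisymm ((hiff S T).2 h.le) ((hiff T S).2 h.ge)
  · intro S _ _
    have := hcon S
    simpa using this


/-- if m ≥ 3, n, ℓ ≥ 1, N ≥ m(ℓ − 1) + (m − 2)n, and there are red sets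
A₁, …, A_m of size at most ℓ − 1 each containing a private element x_i ∉ A_j (j ≠ i),
then Q_N contains a copy of Q_m red except possibly at ∅ and [N], or a copy of Q_n blue
except possibly at ∅ and [N]. -/
theorem m_private_sets (m n ℓ N : ℕ) (hm : 3 ≤ m) (hn : 1 ≤ n) (hℓ : 1 ≤ ℓ)
    (hN : N ≥ m * (ℓ - 1) + (m - 2) * n)
    (c : Finset (Fin N) → Bool)
    (A : Fin m → Finset (Fin N))
    (hred : ∀ i, c (A i) = true)
    (hcard : ∀ i, (A i).card ≤ ℓ - 1)
    (hpriv : ∀ i, ∃ x ∈ A i, ∀ j, j ≠ i → x ∉ A j) :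
    HasQuasiRedCopy m N c ∨ HasQuasiBlueCopy n N c := by

  by_cases hblue : HasQuasiBlueCopy n N c
  · exact Or.inr hblue
  left
  choose x hxA hxnot using hpriv
  set U : Finset (Fin N) := Finset.univ.biUnion A with hU
  have hxU : ∀ i, x i ∈ U := fun i => Finset.mem_biUnion.2 ⟨i, Finset.mem_univ i, hxA i⟩
  have hAU : ∀ i, A i ⊆ U := fun i a ha => Finset.mem_biUnion.2 ⟨i, Finset.mem_univ i, ha⟩
  have hUcard : U.card ≤ m * (ℓ - 1) := by
    calc U.card ≤ ∑ i : Fin m, (A i).card := Finset.card_biUnion_le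
    _ ≤ ∑ _i : Fin m, (ℓ - 1) := Finset.sum_le_sum (fun i _ => hcard i)
    _ = m * (ℓ - 1) := by simp [Finset.sum_const, mul_comm]
  have hcompl : (m - 2) * n ≤ Uᶜ.card := by
    have h1 : Uᶜ.card = N - U.card := by
      rw [Finset.card_compl, Fintype.card_fin]
    rw [h1]
    set a := m * (ℓ - 1)
    set b := (m - 2) * n
    omega
  obtain ⟨emb⟩ : Nonempty (Fin (m - 2) × Fin n ↪ {y // y ∈ Uᶜ}) := by
    apply Function.Embedding.nonempty_of_card_le
    simp only [Fintype.card_prod, Fintype.card_fin, Fintype.card_coe]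
    exact hcompl
  set e : Fin (m - 2) × Fin n → Fin N := fun p => (emb p : Fin N) with he_def
  have he : Function.Injective e := fun p q h => emb.injective (Subtype.ext h)
  have heU : ∀ p, e p ∉ U := fun p => Finset.mem_compl.1 (emb p).2
  have hxe : ∀ i p, e p ≠ x i := fun i p h => heU p (h ▸ hxU i)
  have hm2 : 0 < m - 2 := by omega
  -- the index of the block used at level `S.card`
  set idx : Finset (Fin m) → Fin (m - 2) :=
    fun S => ⟨(S.card - 2) % (m - 2), Nat.mod_lt _ hm2⟩ with hidx_def
  have hidx : ∀ S : Finset (Fin m), 2 ≤ S.card → S.card ≤ m - 1 →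
      (idx S : ℕ) + 2 = S.card := by
    intro S h2 h3
    have : (S.card - 2) % (m - 2) = S.card - 2 := Nat.mod_eq_of_lt (by omega)
    simp only [hidx_def, this]
    omega
  set ι : Finset (Fin m) → Fin n → Fin N := fun S t => e (idx S, t) with hι_def
  have hι_inj : ∀ S, Function.Injective (ι S) := by
    intro S t t' h
    have := he h
    exact (Prod.mk.injEq _ _ _ _ ▸ this).2
  -- D k : the union of blocks for levels < k
  set D : ℕ → Finset (Fin N) :=
    fun k => (Finset.univ.filter (fun p : Fin (m - 2) × Fin n => (p.1 : ℕ) + 2 < k)).image e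
    with hD_def
  have hmemD : ∀ k y, y ∈ D k ↔ ∃ p : Fin (m - 2) × Fin n, (p.1 : ℕ) + 2 < k ∧ e p = y := by
    intro k y
    simp [hD_def, Finset.mem_image, Finset.mem_filter]
  have hDmono : ∀ k k', k ≤ k' → D k ⊆ D k' := by
    intro k k' hk y hy
    rw [hmemD] at *
    obtain ⟨p, hp, rfl⟩ := hy
    exact ⟨p, by omega, rfl⟩
  have hxD : ∀ i k, x i ∉ D k := by
    intro i k h
    obtain ⟨p, _, hp⟩ := (hmemD k (x i)).1 h
    exact hxe i p hp
  have hDU : ∀ k y, y ∈ D k → y ∉ U := by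
    intro k y hy
    obtain ⟨p, _, rfl⟩ := (hmemD k y).1 hy
    exact heU p
  set C : Finset (Fin m) → Finset (Fin N) := fun S => S.biUnion A ∪ D S.card with hC_def
  have hι_notC : ∀ S : Finset (Fin m), 2 ≤ S.card → S.card ≤ m - 1 →
      ∀ t, ι S t ∉ C S := by
    intro S h2 h3 t ht
    rcases Finset.mem_union.1 ht with h | h
    · obtain ⟨j, _, hj⟩ := Finset.mem_biUnion.1 h
      exact heU (idx S, t) (hAU j hj)
    · obtain ⟨p, hp, hpe⟩ := (hmemD _ _).1 h
      have := he hpe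
      have hp1 : (p.1 : ℕ) = (idx S : ℕ) := by rw [this]
      have := hidx S h2 h3
      omega
  have key : ∀ S : Finset (Fin m), 2 ≤ S.card → S.card ≤ m - 1 →
      ∃ T : Finset (Fin n), c (C S ∪ T.image (ι S)) = true := by
    intro S h2 h3
    exact exists_red_above hblue (C S) (ι S) (hι_inj S) (hι_notC S h2 h3)
  choose T hT using key
  set f : Finset (Fin m) → Finset (Fin N) := fun S =>
    if S = ∅ then ∅
    else if S = Finset.univ then Finset.univ
    else if h : 2 ≤ S.card ∧ S.card ≤ m - 1 then C S ∪ (T S h.1 h.2).image (ι S)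
    else S.biUnion A
    with hf_def
  -- basic card facts
  have hcard_le : ∀ S : Finset (Fin m), S ≠ Finset.univ → S.card ≤ m - 1 := by
    intro S hS
    have h1 : S.card ≤ m := by
      have := Finset.card_le_univ S
      simpa using this
    rcases eq_or_lt_of_le h1 with h | h
    · exact absurd (Finset.eq_univ_of_card S (by simpa using h)) hS
    · omega
  have hcard_pos : ∀ S : Finset (Fin m), S ≠ ∅ → 1 ≤ S.card := by
    intro S hS
    exact Finset.card_pos.2 (Finset.nonempty_iff_ne_empty.2 hS)
  have huniv_ne : (Finset.univ : Finset (Fin m)) ≠ ∅ := by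
    intro h
    have h2 : (Finset.univ : Finset (Fin m)).card = 0 := by rw [h]; simp
    rw [Finset.card_univ, Fintype.card_fin] at h2
    omega
  -- membership of the private elements
  have hxb : ∀ i (S : Finset (Fin m)), x i ∈ S.biUnion A ↔ i ∈ S := by
    intro i S
    constructor
    · intro h
      obtain ⟨j, hjS, hj⟩ := Finset.mem_biUnion.1 h
      by_cases hij : j = i
      · rwa [hij] at hjS
      · exact absurd hj (hxnot i j hij)
    · intro h
      exact Finset.mem_biUnion.2 ⟨i, h, hxA i⟩
  have hximg : ∀ i S (W : Finset (Fin n)), x i ∉ W.image (ι S) := by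
    intro i S W h
    obtain ⟨t, _, ht⟩ := Finset.mem_image.1 h
    exact hxe i (idx S, t) ht
  have hxm : ∀ i (S : Finset (Fin m)), x i ∈ f S ↔ i ∈ S := by
    intro i S
    rw [hf_def]
    by_cases h0 : S = ∅
    · simp [h0]
    by_cases h1 : S = Finset.univ
    · simp [h0, h1, huniv_ne]
    simp only [h0, h1, if_false]
    by_cases h2 : 2 ≤ S.card ∧ S.card ≤ m - 1
    · rw [dif_pos h2]
      rw [hC_def]
      simp only [Finset.mem_union]
      constructor
      · rintro ((h | h) | h)
        · exact (hxb i S).1 h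
        · exact absurd h (hxD i _)
        · exact absurd h (hximg i S _)
      · intro h
        exact Or.inl (Or.inl ((hxb i S).2 h))
    · rw [dif_neg h2]
      exact hxb i S
  -- monotonicity
  have hCf : ∀ S : Finset (Fin m), S ≠ ∅ → S ≠ Finset.univ →
      S.biUnion A ⊆ f S := by
    intro S h0 h1
    rw [hf_def]
    simp only [h0, h1, if_false]
    by_cases h2 : 2 ≤ S.card ∧ S.card ≤ m - 1
    · rw [dif_pos h2, hC_def]
      intro y hy
      exact Finset.mem_union_left _ (Finset.mem_union_left _ hy)
    · rw [dif_neg h2]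
  have hfsub : ∀ S : Finset (Fin m), S ≠ ∅ → S ≠ Finset.univ →
      f S ⊆ S.biUnion A ∪ D (S.card + 1) := by
    intro S h0 h1
    rw [hf_def]
    simp only [h0, h1, if_false]
    by_cases h2 : 2 ≤ S.card ∧ S.card ≤ m - 1
    · rw [dif_pos h2, hC_def]
      intro y hy
      rcases Finset.mem_union.1 hy with (h | h)
      · rcases Finset.mem_union.1 h with (h | h)
        · exact Finset.mem_union_left _ h
        · exact Finset.mem_union_right _ (hDmono _ _ (by omega) h)
      · obtain ⟨t, _, rfl⟩ := Finset.mem_image.1 h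
        refine Finset.mem_union_right _ ((hmemD _ _).2 ⟨(idx S, t), ?_, rfl⟩)
        have := hidx S h2.1 h2.2
        show (idx S : ℕ) + 2 < S.card + 1
        omega
    · rw [dif_neg h2]
      exact fun y hy => Finset.mem_union_left _ hy
  have hmono : ∀ S T : Finset (Fin m), S ⊆ T → f S ⊆ f T := by
    intro S W hSW
    by_cases h0 : S = ∅
    · rw [hf_def]; simp [h0]
    by_cases h1 : W = Finset.univ
    · rw [h1, hf_def]
      simp [huniv_ne]
    have hW0 : W ≠ ∅ := by
      intro h
      exact h0 (Finset.subset_empty.1 (h ▸ hSW))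
    have hS1 : S ≠ Finset.univ := by
      intro h
      exact h1 (Finset.univ_subset_iff.mp (h ▸ hSW))
    by_cases hST : S = W
    · rw [hST]
    have hlt : S.card < W.card := Finset.card_lt_card (lt_of_le_of_ne hSW hST)
    have hWcard : W.card ≤ m - 1 := hcard_le W h1
    have hW2 : 2 ≤ W.card := by
      have := hcard_pos S h0
      omega
    calc f S ⊆ S.biUnion A ∪ D (S.card + 1) := hfsub S h0 hS1
    _ ⊆ W.biUnion A ∪ D W.card := by
        apply Finset.union_subset_union
        · exact Finset.biUnion_subset_biUnion_of_subset_left A hSW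
        · exact hDmono _ _ (by omega)
    _ ⊆ f W := by
        rw [hf_def]
        simp only [hW0, h1, if_false]
        rw [dif_pos ⟨hW2, hWcard⟩, hC_def]
        exact Finset.subset_union_left
  -- the iff
  have hiff : ∀ S W : Finset (Fin m), S ⊆ W ↔ f S ⊆ f W := by
    intro S W
    refine ⟨hmono S W, fun h i hi => ?_⟩
    exact (hxm i W).1 (h ((hxm i S).2 hi))
  refine ⟨f, ?_, hiff, ?_⟩
  · intro S W h
    exact Finset.Subset.antisymm ((hiff S W).2 h.le) ((hiff W S).2 h.ge)
  · intro S hS0 hS1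
    rw [hf_def] at hS0 hS1 ⊢
    by_cases h0 : S = ∅
    · simp [h0] at hS0
    by_cases h1 : S = Finset.univ
    · simp [h0, h1, huniv_ne] at hS1
    simp only [h0, h1, if_false] at hS0 hS1 ⊢
    by_cases h2 : 2 ≤ S.card ∧ S.card ≤ m - 1
    · rw [dif_pos h2]
      exact hT S h2.1 h2.2
    · rw [dif_neg h2]
      have hc1 : S.card = 1 := by
        have := hcard_pos S h0
        have := hcard_le S h1
        omega
      obtain ⟨i, rfl⟩ := Finset.card_eq_one.1 hc1
      rw [Finset.singleton_biUnion]
      exact hred i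
end

section
/- For all integers m ≥ 1, n ≥ 1, and N ≥ n + (n + 1)·m, every 2-coloring of the Boolean lattice Q_N contains a red copy of Q_m or a blue copy of Q_n. (Consequently R(Q_m, Q_n) ≤ mn + n + m.) -/
namespace RamseyUpperAux

/-- The `k`-th block of `m` fresh coordinates, living in positions
`[n + k*m, n + k*m + m)`. -/
def blkSet (m n N k : ℕ) : Finset (Fin N) :=
  Finset.univ.filter (fun a => n + k * m ≤ a.val ∧ a.val < n + k * m + m)

/-- The union of the blocks `0, …, k-1`, i.e. positions `[n, n + k*m)`. -/
def ySub (m n N k : ℕ) : Finset (Fin N) :=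
  Finset.univ.filter (fun a => n ≤ a.val ∧ a.val < n + k * m)

/-- The copy of `S : Finset (Fin n)` in the first `n` coordinates of `Fin N`. -/
def xSet (n N : ℕ) (S : Finset (Fin n)) : Finset (Fin N) :=
  Finset.univ.filter (fun a => ∃ i ∈ S, (i : ℕ) = a.val)

theorem mem_blkSet {m n N k : ℕ} {a : Fin N} :
    a ∈ blkSet m n N k ↔ n + k * m ≤ a.val ∧ a.val < n + k * m + m := by
  simp [blkSet]

theorem mem_ySub {m n N k : ℕ} {a : Fin N} :
    a ∈ ySub m n N k ↔ n ≤ a.val ∧ a.val < n + k * m := by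
  simp [ySub]

theorem mem_xSet {n N : ℕ} {S : Finset (Fin n)} {a : Fin N} :
    a ∈ xSet n N S ↔ ∃ i ∈ S, (i : ℕ) = a.val := by
  simp [xSet]

theorem xSet_val_lt {n N : ℕ} {S : Finset (Fin n)} {a : Fin N}
    (h : a ∈ xSet n N S) : a.val < n := by
  obtain ⟨i, _, hi⟩ := mem_xSet.mp h
  exact hi ▸ i.isLt

theorem xSet_mono {n N : ℕ} {S T : Finset (Fin n)} (h : S ⊆ T) :
    xSet n N S ⊆ xSet n N T := by
  intro a ha
  obtain ⟨i, hiS, hi⟩ := mem_xSet.mp ha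
  exact mem_xSet.mpr ⟨i, h hiS, hi⟩

theorem xSet_subset_rev {n N : ℕ} (hnN : n ≤ N) {S T : Finset (Fin n)}
    (h : xSet n N S ⊆ xSet n N T) : S ⊆ T := by
  intro i hi
  have hilt : (i : ℕ) < N := lt_of_lt_of_le i.isLt hnN
  have : (⟨(i : ℕ), hilt⟩ : Fin N) ∈ xSet n N S := mem_xSet.mpr ⟨i, hi, rfl⟩
  obtain ⟨j, hjT, hj⟩ := mem_xSet.mp (h this)
  have : j = i := Fin.ext (by simpa using hj)
  exact this ▸ hjT

theorem ySub_mono {m n N : ℕ} {k l : ℕ} (h : k ≤ l) :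
    ySub m n N k ⊆ ySub m n N l := by
  intro a ha
  rw [mem_ySub] at ha ⊢
  exact ⟨ha.1, lt_of_lt_of_le ha.2 (by
    have := Nat.mul_le_mul_right m h
    omega)⟩

theorem blkSet_subset_ySub {m n N k : ℕ} :
    blkSet m n N k ⊆ ySub m n N (k + 1) := by
  intro a ha
  rw [mem_blkSet] at ha
  rw [mem_ySub]
  constructor
  · omega
  · have : (k + 1) * m = k * m + m := by ring
    omega

theorem disj_blk {m n N k : ℕ} {S : Finset (Fin n)} :
    Disjoint (xSet n N S ∪ ySub m n N k) (blkSet m n N k) := by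
  rw [Finset.disjoint_left]
  intro a ha hb
  rw [mem_blkSet] at hb
  rcases Finset.mem_union.mp ha with h | h
  · have := xSet_val_lt h
    omega
  · rw [mem_ySub] at h
    omega

theorem blk_card {m n N k : ℕ} (h : n + k * m + m ≤ N) :
    (blkSet m n N k).card = m := by
  have key : blkSet m n N k =
      (Finset.Ico (n + k * m) (n + k * m + m)).attachFin
        (fun i hi => by rw [Finset.mem_Ico] at hi; omega) := by
    ext a
    rw [mem_blkSet, Finset.mem_attachFin, Finset.mem_Ico]
  rw [key, Finset.card_attachFin, Nat.card_Ico]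
  omega

/-- Extension lemma: if there is no red `Q_m`, then over any base `A`, using
fresh elements from any `m`-set `W` disjoint from `A`, some extension is blue. -/
theorem ext_lemma {m N : ℕ} {c : Finset (Fin N) → Bool}
    (hred : ¬ HasRedCopy m N c) (A W : Finset (Fin N))
    (hd : Disjoint A W) (hW : W.card = m) :
    ∃ V, V ⊆ W ∧ c (A ∪ V) = false := by
  by_contra hcon
  push_neg at hcon
  apply hred
  set w : Fin m → Fin N := fun i => ((W.orderIsoOfFin hW) i : Fin N) with hw
  have hwW : ∀ i, w i ∈ W := fun i => ((W.orderIsoOfFin hW) i).2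
  have hwinj : Function.Injective w := by
    intro i j hij
    exact (W.orderIsoOfFin hW).injective (Subtype.ext hij)
  refine ⟨fun S => A ∪ S.image w, ?_, ?_, ?_⟩
  · intro S T hST
    have h1 : ∀ S T : Finset (Fin m), A ∪ S.image w ⊆ A ∪ T.image w → S ⊆ T := by
      intro S T hsub i hi
      have : w i ∈ A ∪ T.image w :=
        hsub (Finset.mem_union_right _ (Finset.mem_image_of_mem w hi))
      rcases Finset.mem_union.mp this with h | h
      · exact absurd h (Finset.disjoint_right.mp hd (hwW i))
      · obtain ⟨j, hjT, hj⟩ := Finset.mem_image.mp h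
        exact (hwinj hj) ▸ hjT
    exact Finset.Subset.antisymm (h1 _ _ (le_of_eq hST)) (h1 _ _ (le_of_eq hST.symm))
  · intro S T
    constructor
    · intro h
      exact Finset.union_subset_union_right (Finset.image_subset_image h)
    · intro hsub i hi
      have : w i ∈ A ∪ T.image w :=
        hsub (Finset.mem_union_right _ (Finset.mem_image_of_mem w hi))
      rcases Finset.mem_union.mp this with h | h
      · exact absurd h (Finset.disjoint_right.mp hd (hwW i))
      · obtain ⟨j, hjT, hj⟩ := Finset.mem_image.mp h
        exact (hwinj hj) ▸ hjT
  · intro S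
    have hsub : S.image w ⊆ W := by
      intro a ha
      obtain ⟨i, _, hi⟩ := Finset.mem_image.mp ha
      exact hi ▸ hwW i
    have := hcon (S.image w) hsub
    exact Bool.not_eq_false _ |>.mp this

variable {m n N : ℕ}

theorem card_bound (hN : n + (n + 1) * m ≤ N) (S : Finset (Fin n)) :
    n + S.card * m + m ≤ N := by
  have h1 : S.card ≤ n := by
    have := Finset.card_le_univ S
    simpa using this
  have h2 : S.card * m ≤ n * m := Nat.mul_le_mul_right m h1
  have h3 : (n + 1) * m = n * m + m := by ring
  omega

/-- One step of the recursive construction of the blue copy. -/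
noncomputable def step (hN : n + (n + 1) * m ≤ N) (c : Finset (Fin N) → Bool)
    (hred : ¬ HasRedCopy m N c) (S : Finset (Fin n))
    (ih : ∀ T ⊂ S, Finset (Fin N)) : Finset (Fin N) :=
  ((xSet n N S ∪ S.ssubsets.attach.sup fun T => ih T.1 (Finset.mem_ssubsets.mp T.2))
      \ blkSet m n N S.card)
  ∪ (ext_lemma hred
      ((xSet n N S ∪ S.ssubsets.attach.sup fun T => ih T.1 (Finset.mem_ssubsets.mp T.2))
        \ blkSet m n N S.card)
      (blkSet m n N S.card) Finset.sdiff_disjoint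
      (blk_card (card_bound hN S))).choose

/-- The blue copy of `Q_n`, built by strong induction. -/
noncomputable def buildF (hN : n + (n + 1) * m ≤ N) (c : Finset (Fin N) → Bool)
    (hred : ¬ HasRedCopy m N c) : ∀ _ : Finset (Fin n), Finset (Fin N) :=
  Finset.strongInduction (step hN c hred)

theorem buildF_eq (hN : n + (n + 1) * m ≤ N) (c : Finset (Fin N) → Bool)
    (hred : ¬ HasRedCopy m N c) (S : Finset (Fin n)) :
    buildF hN c hred S = step hN c hred S (fun T _ => buildF hN c hred T) :=
  Finset.strongInduction_eq (step hN c hred) S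

theorem buildF_blue (hN : n + (n + 1) * m ≤ N) (c : Finset (Fin N) → Bool)
    (hred : ¬ HasRedCopy m N c) (S : Finset (Fin n)) :
    c (buildF hN c hred S) = false := by
  rw [buildF_eq, step]
  exact (ext_lemma hred _ (blkSet m n N S.card) Finset.sdiff_disjoint
      (blk_card (card_bound hN S))).choose_spec.2

theorem buildF_bound (hN : n + (n + 1) * m ≤ N) (c : Finset (Fin N) → Bool)
    (hred : ¬ HasRedCopy m N c) :
    ∀ S : Finset (Fin n), buildF hN c hred S ⊆ xSet n N S ∪ ySub m n N (S.card + 1) := by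
  intro S
  induction S using Finset.strongInduction with
  | _ S ih =>
    rw [buildF_eq, step]
    refine Finset.union_subset (Finset.sdiff_subset.trans
      (Finset.union_subset Finset.subset_union_left ?_)) ?_
    · intro a ha
      obtain ⟨T, _, haT⟩ := Finset.mem_sup.mp ha
      have hT : T.1 ⊂ S := Finset.mem_ssubsets.mp T.2
      have h2 := ih T.1 hT haT
      rcases Finset.mem_union.mp h2 with h' | h'
      · exact Finset.mem_union_left _ (xSet_mono hT.subset h')
      · refine Finset.mem_union_right _ (ySub_mono ?_ h')
        have := Finset.card_lt_card hT
        omega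
    · refine Finset.Subset.trans ?_ Finset.subset_union_right
      exact ((ext_lemma hred _ _ Finset.sdiff_disjoint
        (blk_card (card_bound hN S))).choose_spec.1).trans blkSet_subset_ySub

theorem U_bound (hN : n + (n + 1) * m ≤ N) (c : Finset (Fin N) → Bool)
    (hred : ¬ HasRedCopy m N c) (S : Finset (Fin n)) :
    (xSet n N S ∪ S.ssubsets.attach.sup fun T =>
        buildF hN c hred T.1) ⊆ xSet n N S ∪ ySub m n N S.card := by
  refine Finset.union_subset Finset.subset_union_left ?_
  intro a ha
  obtain ⟨T, _, haT⟩ := Finset.mem_sup.mp ha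
  have hT : T.1 ⊂ S := Finset.mem_ssubsets.mp T.2
  have h2 := buildF_bound hN c hred T.1 haT
  rcases Finset.mem_union.mp h2 with h' | h'
  · exact Finset.mem_union_left _ (xSet_mono hT.subset h')
  · refine Finset.mem_union_right _ (ySub_mono ?_ h')
    have := Finset.card_lt_card hT
    omega

theorem buildF_contains (hN : n + (n + 1) * m ≤ N) (c : Finset (Fin N) → Bool)
    (hred : ¬ HasRedCopy m N c) (S : Finset (Fin n)) :
    (xSet n N S ∪ S.ssubsets.attach.sup fun T => buildF hN c hred T.1)
      ⊆ buildF hN c hred S := by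
  rw [buildF_eq, step]
  refine Finset.Subset.trans ?_ Finset.subset_union_left
  refine Finset.subset_sdiff.mpr ⟨Finset.Subset.refl _, ?_⟩
  exact Finset.disjoint_of_subset_left (U_bound hN c hred S) disj_blk

theorem buildF_mono (hN : n + (n + 1) * m ≤ N) (c : Finset (Fin N) → Bool)
    (hred : ¬ HasRedCopy m N c) {S T : Finset (Fin n)} (h : S ⊆ T) :
    buildF hN c hred S ⊆ buildF hN c hred T := by
  rcases eq_or_ne S T with rfl | hne
  · exact Finset.Subset.refl _
  · have hST : S ⊂ T := lt_of_le_of_ne h hne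
    intro a ha
    refine buildF_contains hN c hred T (Finset.mem_union_right _ ?_)
    exact Finset.mem_sup.mpr ⟨⟨S, Finset.mem_ssubsets.mpr hST⟩, Finset.mem_attach _ _, ha⟩

theorem buildF_xSet (hN : n + (n + 1) * m ≤ N) (c : Finset (Fin N) → Bool)
    (hred : ¬ HasRedCopy m N c) (S : Finset (Fin n)) :
    xSet n N S ⊆ buildF hN c hred S :=
  Finset.subset_union_left.trans (buildF_contains hN c hred S)

theorem buildF_rev (hN : n + (n + 1) * m ≤ N) (c : Finset (Fin N) → Bool)
    (hred : ¬ HasRedCopy m N c) {S T : Finset (Fin n)}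
    (h : buildF hN c hred S ⊆ buildF hN c hred T) : S ⊆ T := by
  have hnN : n ≤ N := by
    have : n ≤ n + (n + 1) * m := Nat.le_add_right _ _
    omega
  apply xSet_subset_rev hnN (S := S) (T := T)
  intro a ha
  have h1 : a ∈ buildF hN c hred T :=
    h (buildF_xSet hN c hred S ha)
  have h2 := buildF_bound hN c hred T h1
  rcases Finset.mem_union.mp h2 with h' | h'
  · exact h'
  · exfalso
    have := xSet_val_lt ha
    rw [mem_ySub] at h'
    omega

end RamseyUpperAux

/-- if m, n ≥ 1 and N ≥ n + (n + 1)m, every 2-coloring of Q_N contains a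
red copy of Q_m or a blue copy of Q_n; consequently R(Q_m, Q_n) ≤ mn + n + m. -/
theorem ramsey_upper_mn (m n N : ℕ) (hm : 1 ≤ m) (hn : 1 ≤ n)
    (hN : N ≥ n + (n + 1) * m)
    (c : Finset (Fin N) → Bool) :
    HasRedCopy m N c ∨ HasBlueCopy n N c := by
  by_cases hred : HasRedCopy m N c
  · exact Or.inl hred
  · right
    refine ⟨RamseyUpperAux.buildF hN c hred, ?_, ?_, RamseyUpperAux.buildF_blue hN c hred⟩
    · intro S T hST
      exact Finset.Subset.antisymm
        (RamseyUpperAux.buildF_rev hN c hred (le_of_eq hST))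
        (RamseyUpperAux.buildF_rev hN c hred (le_of_eq hST.symm))
    · intro S T
      exact ⟨fun h => RamseyUpperAux.buildF_mono hN c hred h,
        fun h => RamseyUpperAux.buildF_rev hN c hred h⟩
end

section
/- Every 2-coloring of the Boolean lattice Q_5 in which the empty set, the full ground set [5], and at least three of the five singleton sets are colored blue contains a red copy of Q_2 or a blue copy of Q_3. -/
lemma inj_of_iff {m N : ℕ} (f : Finset (Fin m) → Finset (Fin N))
    (h : ∀ S T, S ⊆ T ↔ f S ⊆ f T) : Function.Injective f := by
  intro S T hST
  exact Finset.Subset.antisymm ((h S T).mpr (hST ▸ Finset.Subset.refl _))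
    ((h T S).mpr (hST ▸ Finset.Subset.refl _))

def fred (x y d e : Fin 5) : Finset (Fin 2) → Finset (Fin 5) := fun S =>
  if 0 ∈ S then (if 1 ∈ S then {x, y, d, e} else {x, y, d})
  else (if 1 ∈ S then {x, y, e} else {x, y})

def fblue (a b v : Fin 5) (Pab Pav Pbv : Finset (Fin 5)) :
    Finset (Fin 3) → Finset (Fin 5) := fun S =>
  if 0 ∈ S then
    (if 1 ∈ S then (if 2 ∈ S then Finset.univ else Pab)
     else (if 2 ∈ S then Pav else {a}))
  else
    (if 1 ∈ S then (if 2 ∈ S then Pbv else {b})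
     else (if 2 ∈ S then {v} else ∅))

lemma redQ2 (c : Finset (Fin 5) → Bool) (x y z : Fin 5)
    (hxy : x ≠ y) (hxz : x ≠ z) (hyz : y ≠ z)
    (h : ∀ X : Finset (Fin 5), x ∈ X → y ∈ X → z ∉ X → c X = true) :
    HasRedCopy 2 5 c := by
  have hcard : ({x, y, z} : Finset (Fin 5)).card = 3 := by
    rw [Finset.card_insert_of_notMem (by simp [hxy, hxz]),
        Finset.card_insert_of_notMem (by simp [hyz])]
    simp
  have hc2 : ({x, y, z}ᶜ : Finset (Fin 5)).card = 2 := by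
    rw [Finset.card_compl, hcard]; rfl
  obtain ⟨d, e, hde, hset⟩ := Finset.card_eq_two.mp hc2
  have hd : d ∉ ({x, y, z} : Finset (Fin 5)) := by
    rw [← Finset.mem_compl, hset]; simp
  have he : e ∉ ({x, y, z} : Finset (Fin 5)) := by
    rw [← Finset.mem_compl, hset]; simp
  simp only [Finset.mem_insert, Finset.mem_singleton, not_or] at hd he
  obtain ⟨hdx, hdy, hdz⟩ := hd
  obtain ⟨hex, hey, hez⟩ := he
  refine Or.elim ?_ id id
  left
  have hzx : ¬ z = x := fun hh => hxz hh.symm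
  have hzy : ¬ z = y := fun hh => hyz hh.symm
  have hzd : ¬ z = d := fun hh => hdz hh.symm
  have hze : ¬ z = e := fun hh => hez hh.symm
  have hiff : ∀ S T : Finset (Fin 2), S ⊆ T ↔ fred x y d e S ⊆ fred x y d e T := by
    intro S T
    fin_cases S <;> fin_cases T <;>
      simp_all [fred, Finset.subset_iff] <;> tauto
  refine ⟨fred x y d e, inj_of_iff _ hiff, hiff, ?_⟩
  intro S
  fin_cases S <;>
    · apply h <;> simp [fred, hzx, hzy, hzd, hze]

set_option maxHeartbeats 2000000 in
lemma blueQ3 (c : Finset (Fin 5) → Bool) (a b v : Fin 5)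
    (hab : a ≠ b) (hav : a ≠ v) (hbv : b ≠ v)
    (Pab Pav Pbv : Finset (Fin 5))
    (ha1 : a ∈ Pab) (hb1 : b ∈ Pab) (hv1 : v ∉ Pab)
    (ha2 : a ∈ Pav) (hv2 : v ∈ Pav) (hb2 : b ∉ Pav)
    (hb3 : b ∈ Pbv) (hv3 : v ∈ Pbv) (ha3 : a ∉ Pbv)
    (hbot : c ∅ = false) (htop : c Finset.univ = false)
    (hca : c {a} = false) (hcb : c {b} = false) (hcv : c {v} = false)
    (h1 : c Pab = false) (h2 : c Pav = false) (h3 : c Pbv = false) :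
    HasBlueCopy 3 5 c := by
  have hiff : ∀ S T : Finset (Fin 3), S ⊆ T ↔
      fblue a b v Pab Pav Pbv S ⊆ fblue a b v Pab Pav Pbv T := by
    intro S T
    fin_cases S <;> fin_cases T <;>
      simp_all [fblue, Finset.subset_iff] <;> tauto
  refine ⟨fblue a b v Pab Pav Pbv, inj_of_iff _ hiff, hiff, ?_⟩
  intro S
  fin_cases S <;>
    simp [fblue, hbot, htop, hca, hcb, hcv, h1, h2, h3]

/-- every 2-coloring of Q_5 in which ∅, [5], and at least three of the five
singletons are blue contains a red copy of Q_2 or a blue copy of Q_3. -/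
theorem Q5_three_blue_singletons (c : Finset (Fin 5) → Bool)
    (hbot : c ∅ = false) (htop : c Finset.univ = false)
    (hsing : ∃ s : Finset (Fin 5), 3 ≤ s.card ∧ ∀ x ∈ s, c {x} = false) :
    HasRedCopy 2 5 c ∨ HasBlueCopy 3 5 c := by
  obtain ⟨s, hs3, hsb⟩ := hsing
  obtain ⟨t, hts, htc⟩ := Finset.exists_subset_card_eq hs3
  obtain ⟨a, b, v, hab, hav, hbv, rfl⟩ := Finset.card_eq_three.mp htc
  have hca : c {a} = false := hsb a (hts (by simp))
  have hcb : c {b} = false := hsb b (hts (by simp))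
  have hcv : c {v} = false := hsb v (hts (by simp))
  by_cases H1 : ∃ P : Finset (Fin 5), a ∈ P ∧ b ∈ P ∧ v ∉ P ∧ c P = false
  · by_cases H2 : ∃ P : Finset (Fin 5), a ∈ P ∧ v ∈ P ∧ b ∉ P ∧ c P = false
    · by_cases H3 : ∃ P : Finset (Fin 5), b ∈ P ∧ v ∈ P ∧ a ∉ P ∧ c P = false
      · obtain ⟨P1, hP1a, hP1b, hP1v, hP1c⟩ := H1
        obtain ⟨P2, hP2a, hP2v, hP2b, hP2c⟩ := H2
        obtain ⟨P3, hP3b, hP3v, hP3a, hP3c⟩ := H3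
        exact Or.inr (blueQ3 c a b v hab hav hbv P1 P2 P3 hP1a hP1b hP1v hP2a
          hP2v hP2b hP3b hP3v hP3a hbot htop hca hcb hcv hP1c hP2c hP3c)
      · push_neg at H3
        refine Or.inl (redQ2 c b v a hbv (Ne.symm hab) (Ne.symm hav) ?_)
        intro X hb hv ha
        simpa using H3 X hb hv ha
    · push_neg at H2
      refine Or.inl (redQ2 c a v b hav hab (Ne.symm hbv) ?_)
      intro X ha hv hb
      simpa using H2 X ha hv hb
  · push_neg at H1
    refine Or.inl (redQ2 c a b v hab hav hbv ?_)
    intro X ha hb hv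
    simpa using H1 X ha hb hv
end

section
/- Every 2-coloring of the Boolean lattice Q_5 in which the empty set is colored red and at least two distinct singleton sets are colored red contains a red copy of Q_2 or a blue copy of Q_3. -/
lemma aux_red {N : ℕ} (c : Finset (Fin N) → Bool) (x y : Fin N) (D : Finset (Fin N))
    (hxy : x ≠ y) (hxD : x ∈ D) (hyD : y ∈ D)
    (h0 : c ∅ = true) (hx : c {x} = true) (hy : c {y} = true) (hD : c D = true) :
    HasRedCopy 2 N c := by
  classical
  have cases4 : ∀ S : Finset (Fin 2), S = ∅ ∨ S = {0} ∨ S = {1} ∨ S = Finset.univ := by decide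
  set f : Finset (Fin 2) → Finset (Fin N) :=
    fun S => if S = ∅ then ∅ else if S = {0} then {x} else if S = {1} then {y} else D with hf
  have f0 : f ∅ = ∅ := by simp [hf]
  have f1 : f {0} = {x} := by simp [hf]
  have f2 : f {1} = {y} := by simp [hf]
  have f3 : f Finset.univ = D := by
    rw [hf]
    simp only []
    rw [if_neg (by decide : ¬(Finset.univ : Finset (Fin 2)) = ∅),
        if_neg (by decide : ¬(Finset.univ : Finset (Fin 2)) = {0}),
        if_neg (by decide : ¬(Finset.univ : Finset (Fin 2)) = {1})]
  have h1 : ¬ D ⊆ ∅ := fun h => Finset.notMem_empty x (h hxD)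
  have h2 : ¬ D ⊆ {x} := fun h => hxy.symm (Finset.mem_singleton.mp (h hyD))
  have h3 : ¬ D ⊆ {y} := fun h => hxy (Finset.mem_singleton.mp (h hxD))
  have h4 : ¬ ({x} : Finset (Fin N)) ⊆ {y} :=
    fun h => hxy (Finset.mem_singleton.mp (h (Finset.mem_singleton_self x)))
  have h5 : ¬ ({y} : Finset (Fin N)) ⊆ {x} :=
    fun h => hxy.symm (Finset.mem_singleton.mp (h (Finset.mem_singleton_self y)))
  have h6 : ({x} : Finset (Fin N)) ⊆ D := Finset.singleton_subset_iff.mpr hxD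
  have h7 : ({y} : Finset (Fin N)) ⊆ D := Finset.singleton_subset_iff.mpr hyD
  have h8 : ¬ ({x} : Finset (Fin N)) ⊆ ∅ :=
    fun h => Finset.notMem_empty x (h (Finset.mem_singleton_self x))
  have h9 : ¬ ({y} : Finset (Fin N)) ⊆ ∅ :=
    fun h => Finset.notMem_empty y (h (Finset.mem_singleton_self y))
  have n1 : D ≠ ∅ := fun h => h1 h.le
  have n2 : D ≠ {x} := fun h => h2 h.le
  have n3 : D ≠ {y} := fun h => h3 h.le
  have n4 : x ≠ y := hxy
  have n5 : y ≠ x := hxy.symm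
  have hiff : ∀ S T : Finset (Fin 2), S ⊆ T ↔ f S ⊆ f T := by
    intro S T
    rcases cases4 S with rfl | rfl | rfl | rfl <;>
      rcases cases4 T with rfl | rfl | rfl | rfl <;>
      simp [f0, f1, f2, f3, h1, h2, h3, h4, h5, h6, h7, h8, h9, n1, n2, n3, n4, n5,
        Finset.empty_subset] <;>
      decide
  refine ⟨f, fun S T h => Finset.Subset.antisymm ((hiff S T).mpr h.le)
      ((hiff T S).mpr h.ge), hiff, ?_⟩
  intro S
  rcases cases4 S with rfl | rfl | rfl | rfl <;> simp [f0, f1, f2, f3, h0, hx, hy, hD]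

/-- every 2-coloring of Q_5 with ∅ red and at least two distinct red
singletons contains a red copy of Q_2 or a blue copy of Q_3. -/
theorem Q5_two_red_singletons (c : Finset (Fin 5) → Bool)
    (hbot : c ∅ = true)
    (hsing : ∃ x y : Fin 5, x ≠ y ∧ c {x} = true ∧ c {y} = true) :
    HasRedCopy 2 5 c ∨ HasBlueCopy 3 5 c := by
  classical
  obtain ⟨x, y, hxy, hx, hy⟩ := hsing
  by_cases h : ∃ D : Finset (Fin 5), x ∈ D ∧ y ∈ D ∧ c D = true
  · obtain ⟨D, hxD, hyD, hD⟩ := h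
    exact Or.inl (aux_red c x y D hxy hxD hyD hbot hx hy hD)
  · push_neg at h
    right
    have hcard : ({x, y}ᶜ : Finset (Fin 5)).card = 3 := by
      rw [Finset.card_compl, Finset.card_pair hxy]; simp
    set e := Finset.orderEmbOfFin _ hcard with he
    have hmem : ∀ i : Fin 3, e i ∈ ({x, y}ᶜ : Finset (Fin 5)) :=
      fun i => Finset.orderEmbOfFin_mem _ hcard i
    set f : Finset (Fin 3) → Finset (Fin 5) :=
      fun S => {x, y} ∪ S.map e.toEmbedding with hf
    have hiff : ∀ S T : Finset (Fin 3), S ⊆ T ↔ f S ⊆ f T := by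
      intro S T
      constructor
      · intro hST
        exact Finset.union_subset_union_right (Finset.map_subset_map.mpr hST)
      · intro hST a ha
        have h1 : e a ∈ f S := Finset.mem_union_right _ (Finset.mem_map_of_mem _ ha)
        have h2 := hST h1
        rcases Finset.mem_union.mp h2 with h3 | h3
        · exact absurd h3 (Finset.mem_compl.mp (hmem a))
        · obtain ⟨b, hb, hba⟩ := Finset.mem_map.mp h3
          rwa [← e.injective hba]
    refine ⟨f, fun S T h' => Finset.Subset.antisymm ((hiff S T).mpr h'.le)
        ((hiff T S).mpr h'.ge), hiff, ?_⟩
    intro S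
    have hxf : x ∈ f S := Finset.mem_union_left _ (by simp)
    have hyf : y ∈ f S := Finset.mem_union_left _ (by simp)
    have := h (f S) hxf hyf
    exact Bool.not_eq_true _ |>.mp this
end
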